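/- Let n be an odd perfect number and let q be a prime dividing n whose exponent β in the prime factorization of n is odd. Then β ≡ 1 (mod 4). -/
import Mathlib

open ArithmeticFunction Finset in
/-- If `n` is an odd perfect number and `q` is a prime dividing `n` with odd
multiplicity `β`, then `β ≡ 1 [MOD 4]`. -/
theorem stmt10 (n q : ℕ) (hn_odd : Odd n) (hn_perf : n.Perfect)
    (hq_prime : q.Prime) (hq_dvd : q ∣ n)
    (β : ℕ) (hβ : β = n.factorization q) (hβ_odd : Odd β) :
    β % 4 = 1 := by
  have hn0 : 0 < n := hn_perf.2
  have hσ : ArithmeticFunction.sigma 1 n = 2 * n := by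
    rw [ArithmeticFunction.sigma_one_apply]
    exact (Nat.perfect_iff_sum_divisors_eq_two_mul hn0).mp hn_perf
  have hcop : Nat.Coprime (q ^ β) (n / q ^ β) := by
    rw [hβ]
    exact Nat.Coprime.pow_left _ (Nat.coprime_ordCompl hq_prime hn0.ne')
  have hmul : n = q ^ β * (n / q ^ β) := by
    rw [hβ]; exact (Nat.ordProj_mul_ordCompl_eq_self n q).symm
  have hdvd : ArithmeticFunction.sigma 1 (q ^ β) ∣ 2 * n := by
    rw [← hσ]
    conv_rhs => rw [hmul]
    rw [(ArithmeticFunction.isMultiplicative_sigma).map_mul_of_coprime hcop]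
    exact dvd_mul_right _ _
  have h4 : ¬ (4 ∣ ArithmeticFunction.sigma 1 (q ^ β)) := by
    intro h
    obtain ⟨k, hk⟩ := h.trans hdvd
    obtain ⟨m, hm⟩ := hn_odd
    omega
  rw [ArithmeticFunction.sigma_one_apply_prime_pow hq_prime] at h4
  have hq_odd : q % 2 = 1 := by
    rcases Nat.Prime.eq_two_or_odd hq_prime with h2 | h1
    · exfalso
      obtain ⟨m, hm⟩ := hn_odd
      subst h2
      obtain ⟨c, hc⟩ := hq_dvd
      omega
    · exact h1
  have hcast : ¬ ((((∑ k ∈ Finset.range (β + 1), q ^ k : ℕ)) : ZMod 4) = 0) := by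
    rw [ZMod.natCast_eq_zero_iff]; exact h4
  push_cast at hcast
  rcases (by omega : q % 4 = 1 ∨ q % 4 = 3) with h1 | h3
  · have hq1 : (q : ZMod 4) = 1 := by
      rw [← ZMod.natCast_mod q 4, h1]; rfl
    rw [hq1] at hcast
    simp only [one_pow, Finset.sum_const, Finset.card_range] at hcast
    rw [nsmul_eq_mul, mul_one] at hcast
    rw [ZMod.natCast_eq_zero_iff] at hcast
    obtain ⟨m, hm⟩ := hβ_odd
    omega
  · exfalso
    have hq1 : (q : ZMod 4) = -1 := by
      rw [← ZMod.natCast_mod q 4, h3]; decide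
    rw [hq1, neg_one_geom_sum] at hcast
    obtain ⟨m, hm⟩ := hβ_odd
    rw [if_pos (by exact ⟨m + 1, by omega⟩ : Even (β + 1))] at hcast
    exact hcast rfl
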